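/- For α ∈ (0,1)∪(1,∞), the conditional Rényi quantity H_α^C(X|Y) := min over reverse channels r_{X|Y} of (α/(1−α)) Σ_x p_X(x) log Σ_y p_{Y|X}(y|x) r_{X|Y}(x|y)^{1−1/α} satisfies conditioning reduces entropy: H(X) ≥ H_α^C(X|Y), where H(X) is the Shannon entropy of p_X. -/

import Mathlib

open BigOperators

/-- `p` is a probability distribution on the finite set `X`. -/
def IsDist {X : Type*} [Fintype X] (p : X → ℝ) : Prop :=
  (∀ x, 0 ≤ p x) ∧ ∑ x, p x = 1

/-- `W` is a channel from `X` to `Y`. -/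
def IsChannel {X Y : Type*} [Fintype Y] (W : X → Y → ℝ) : Prop :=
  ∀ x, (∀ y, 0 ≤ W x y) ∧ ∑ y, W x y = 1

/-- Conditioning reduces entropy for the Augustin–Csiszár-type conditional Rényi entropy:
`H(X) ≥ H_α^C(X|Y)`, where
`H_α^C(X|Y) = min_{r_{X|Y}} (α/(1-α)) Σ_x p_X(x) log Σ_y p_{Y|X}(y|x) r_{X|Y}(x|y)^{1-1/α}`. -/
theorem AC_cond_entropy_le_shannon {X Y : Type*} [Fintype X] [Fintype Y]
    (α : ℝ) (hα0 : 0 < α) (hα1 : α ≠ 1)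
    (p : X → ℝ) (W : X → Y → ℝ)
    (hp : IsDist p) (hW : IsChannel W) (hWs : ∀ x y, 0 < W x y) :
    ∀ h : ℝ,
      IsLeast {v : ℝ | ∃ r : Y → X → ℝ, (∀ y, IsDist (r y)) ∧ (∀ y x, 0 < r y x) ∧
          v = (α / (1 - α)) * ∑ x, p x *
                Real.log (∑ y, W x y * r y x ^ (1 - 1 / α))} h →
      h ≤ -∑ x, p x * Real.log (p x) := by
  intro h hle
  have hp1 := hp.1
  have hp2 := hp.2
  have hαne : α ≠ 0 := ne_of_gt hα0
  have h1α : (1 : ℝ) - α ≠ 0 := sub_ne_zero.mpr (Ne.symm hα1)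
  have hcard : 0 < (Fintype.card X : ℝ) := by
    have hne : Nonempty X := by
      by_contra hc
      rw [not_nonempty_iff] at hc
      have h0 : ∑ x, p x = 0 := by simp
      rw [hp2] at h0; norm_num at h0
    exact_mod_cast Fintype.card_pos
  refine le_of_forall_pos_le_add ?_
  intro ε hε
  set E := Real.exp (-ε) with hEdef
  have hE0 : 0 < E := Real.exp_pos _
  have hE1 : E < 1 := by
    rw [hEdef, ← Real.exp_zero]
    exact Real.exp_lt_exp.mpr (by linarith)
  set c : ℝ := (1 - E) / (Fintype.card X) with hcdef
  have hc0 : 0 < c := div_pos (by linarith) hcard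
  set r : Y → X → ℝ := fun _ x => E * p x + c with hrdef
  have hrpos : ∀ y x, 0 < r y x := by
    intro y x
    have := hp1 x
    simp only [hrdef]
    positivity
  have hrsum : ∀ y, ∑ x, r y x = 1 := by
    intro y
    simp only [hrdef]
    rw [Finset.sum_add_distrib, ← Finset.mul_sum, hp2, Finset.sum_const,
      Finset.card_univ, nsmul_eq_mul, mul_one, hcdef]
    field_simp
    ring
  have hmem : ((α / (1 - α)) * ∑ x, p x *
      Real.log (∑ y, W x y * r y x ^ (1 - 1 / α))) ∈
      {v : ℝ | ∃ r : Y → X → ℝ, (∀ y, IsDist (r y)) ∧ (∀ y x, 0 < r y x) ∧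
        v = (α / (1 - α)) * ∑ x, p x *
              Real.log (∑ y, W x y * r y x ^ (1 - 1 / α))} :=
    ⟨r, fun y => ⟨fun x => (hrpos y x).le, hrsum y⟩, hrpos, rfl⟩
  have hh := hle.2 hmem
  have hval : (α / (1 - α)) * ∑ x, p x *
      Real.log (∑ y, W x y * r y x ^ (1 - 1 / α))
      = -∑ x, p x * Real.log (E * p x + c) := by
    have hinner : ∀ x, (∑ y, W x y * r y x ^ (1 - 1 / α))
        = (E * p x + c) ^ (1 - 1 / α) := by
      intro x
      simp only [hrdef]
      rw [← Finset.sum_mul, (hW x).2, one_mul]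
    simp only [hinner]
    rw [Finset.mul_sum, ← neg_one_mul, Finset.mul_sum]
    refine Finset.sum_congr rfl fun x _ => ?_
    have hpos : 0 < E * p x + c := by
      have := hp1 x; positivity
    rw [Real.log_rpow hpos]
    field_simp
    ring
  rw [hval] at hh
  have key : ∑ x, (p x * Real.log (p x) - ε * p x)
      ≤ ∑ x, p x * Real.log (E * p x + c) := by
    apply Finset.sum_le_sum
    intro x _
    rcases eq_or_lt_of_le (hp1 x) with h0 | h0
    · simp [← h0]
    · have hlog : Real.log (p x) - ε ≤ Real.log (E * p x + c) := by
        have h1 : Real.log (E * p x) ≤ Real.log (E * p x + c) :=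
          Real.log_le_log (by positivity) (by linarith)
        rw [Real.log_mul (ne_of_gt hE0) (ne_of_gt h0), hEdef, Real.log_exp] at h1
        linarith
      have h2 := mul_le_mul_of_nonneg_left hlog h0.le
      nlinarith
  rw [Finset.sum_sub_distrib, ← Finset.mul_sum, hp2, mul_one] at key
  linarith
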